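/- Let 1 ≤ q < ∞ and −1/q ≤ λ < 0, and let f_0 = χ_{B_0} in Q_p^n. Then ‖H^p f_0‖_{WḂ^{q,λ}(Q_p^n)} = 1 = ‖f_0‖_{Ḃ^{q,λ}(Q_p^n)}; consequently the operator norm of the p-adic Hardy operator H^p from Ḃ^{q,λ}(Q_p^n) to WḂ^{q,λ}(Q_p^n) is exactly 1. -/

import Mathlib

open MeasureTheory Metric Set
open scoped ENNReal NNReal

noncomputable instance (p : ℕ) [Fact p.Prime] : MeasurableSpace ℚ_[p] := borel _
instance (p : ℕ) [Fact p.Prime] : BorelSpace ℚ_[p] := ⟨rfl⟩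

/-- The closed unit ball of `ℚ_[p]^n` (with the sup norm) as a positive compact set. -/
noncomputable def unitBall (p : ℕ) [Fact p.Prime] (n : ℕ) :
    TopologicalSpace.PositiveCompacts (Fin n → ℚ_[p]) :=
  ⟨⟨closedBall 0 1, isCompact_closedBall 0 1⟩,
    ⟨0, ball_subset_interior_closedBall (mem_ball_self one_pos)⟩⟩

/-- The Haar measure on `ℚ_[p]^n`, normalized so that the unit ball has measure `1`. -/
noncomputable def μp (p : ℕ) [Fact p.Prime] (n : ℕ) : Measure (Fin n → ℚ_[p]) :=
  Measure.addHaarMeasure (unitBall p n)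

/-- The `p`-adic fractional Hardy operator
`H^p_α f(x) = |x|_p^{-(n-α)} ∫_{|y|_p ≤ |x|_p} f(y) dy` (real powers). -/
noncomputable def Hop (p : ℕ) [Fact p.Prime] (n : ℕ) (α : ℝ)
    (f : (Fin n → ℚ_[p]) → ℝ) (x : Fin n → ℚ_[p]) : ℝ :=
  ‖x‖ ^ (α - (n : ℝ)) * ∫ y in {y : Fin n → ℚ_[p] | ‖y‖ ≤ ‖x‖}, f y ∂(μp p n)

/-- The indicator function of the unit ball of `ℚ_[p]^n`. -/
noncomputable def f₀ (p : ℕ) [Fact p.Prime] (n : ℕ) : (Fin n → ℚ_[p]) → ℝ :=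
  Set.indicator {y : Fin n → ℚ_[p] | ‖y‖ ≤ 1} (fun _ => (1 : ℝ))

/-- The `p`-adic central Morrey norm `‖f‖_{Ḃ^{q,l}}`. -/
noncomputable def morrey (p : ℕ) [Fact p.Prime] (n : ℕ) (q l : ℝ)
    (f : (Fin n → ℚ_[p]) → ℝ) : ℝ≥0∞ :=
  ⨆ γ : ℤ, (ENNReal.ofReal (((p : ℝ) ^ ((n : ℝ) * (γ : ℝ))) ^ (-(1 + l * q))) *
    ∫⁻ x in {x : Fin n → ℚ_[p] | ‖x‖ ≤ (p : ℝ) ^ γ},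
      ENNReal.ofReal (|f x| ^ q) ∂(μp p n)) ^ (1 / q)

/-- The weak `p`-adic central Morrey norm `‖g‖_{WḂ^{q,l}}`. -/
noncomputable def wmorrey (p : ℕ) [Fact p.Prime] (n : ℕ) (q l : ℝ)
    (g : (Fin n → ℚ_[p]) → ℝ) : ℝ≥0∞ :=
  ⨆ γ : ℤ, ENNReal.ofReal (((p : ℝ) ^ ((n : ℝ) * (γ : ℝ))) ^ (-(l + 1 / q))) *
    ⨆ (t : ℝ) (_ : 0 < t), ENNReal.ofReal t *
      (μp p n {x : Fin n → ℚ_[p] | ‖x‖ ≤ (p : ℝ) ^ γ ∧ t < |g x|}) ^ (1 / q)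

open scoped Pointwise

section onedim
variable (p : ℕ) [Fact p.Prime]

lemma exists_res (γ : ℤ) (x : ℚ_[p]) (hx : ‖x‖ ≤ (p : ℝ) ^ γ) :
    ∃ a : Fin p, ‖x - ((a : ℕ) : ℚ_[p]) * (p : ℚ_[p]) ^ (-γ)‖ ≤ (p : ℝ) ^ (γ - 1) := by
  have hp0 : (p : ℚ_[p]) ≠ 0 := Nat.cast_ne_zero.2 (Fact.out (p := p.Prime)).ne_zero
  set z : ℚ_[p] := x * (p : ℚ_[p]) ^ γ with hzdef
  have hz : ‖z‖ ≤ 1 := by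
    rw [hzdef, norm_mul, Padic.norm_p_zpow]
    calc ‖x‖ * (p : ℝ) ^ (-γ) ≤ (p:ℝ)^γ * (p:ℝ)^(-γ) := by
          apply mul_le_mul_of_nonneg_right hx (le_of_lt (zpow_pos (by exact_mod_cast (Fact.out (p := p.Prime)).pos) _))
      _ = 1 := by
          rw [← zpow_add₀ (by exact_mod_cast (Fact.out (p := p.Prime)).pos.ne' : (p:ℝ) ≠ 0)]
          simp
  set w : ℤ_[p] := ⟨z, hz⟩ with hwdef
  refine ⟨⟨w.zmodRepr, PadicInt.zmodRepr_lt_p w⟩, ?_⟩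
  have hlt : ‖w - (w.zmodRepr : ℤ_[p])‖ < 1 := by
    rw [PadicInt.norm_lt_one_iff_dvd]
    have := PadicInt.sub_zmodRepr_mem w
    rwa [PadicInt.maximalIdeal_eq_span_p, Ideal.mem_span_singleton] at this
  have hle : ‖z - (w.zmodRepr : ℚ_[p])‖ ≤ (p : ℝ) ^ (-1 : ℤ) := by
    have : ‖z - (w.zmodRepr : ℚ_[p])‖ < (p:ℝ)^(0:ℤ) := by
      have h2 : ((w - (w.zmodRepr : ℤ_[p]) : ℤ_[p]) : ℚ_[p]) = z - (w.zmodRepr : ℚ_[p]) := by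
        push_cast [hwdef]
        rfl
      rw [zpow_zero]
      rw [PadicInt.norm_def, h2] at hlt
      exact hlt
    rw [Padic.norm_lt_pow_iff_norm_le_pow_sub_one] at this
    simpa using this
  have hxz : x = z * (p : ℚ_[p]) ^ (-γ) := by
    rw [hzdef, mul_assoc, ← zpow_add₀ hp0]
    simp
  have key : x - (w.zmodRepr : ℚ_[p]) * (p : ℚ_[p]) ^ (-γ)
      = (z - (w.zmodRepr : ℚ_[p])) * (p : ℚ_[p]) ^ (-γ) := by
    rw [hxz]; ring
  simp only [Fin.val_mk]
  rw [key, norm_mul, Padic.norm_p_zpow, neg_neg]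
  calc ‖z - (w.zmodRepr : ℚ_[p])‖ * (p:ℝ)^γ ≤ (p:ℝ)^(-1:ℤ) * (p:ℝ)^γ := by
        apply mul_le_mul_of_nonneg_right hle (le_of_lt (zpow_pos (by exact_mod_cast (Fact.out (p := p.Prime)).pos) _))
    _ = (p:ℝ)^(γ-1) := by
        rw [← zpow_add₀ (by exact_mod_cast (Fact.out (p := p.Prime)).pos.ne' : (p:ℝ) ≠ 0)]
        ring_nf

lemma res_unique (γ : ℤ) (a b : Fin p)
    (h : ‖((a : ℕ) : ℚ_[p]) * (p : ℚ_[p]) ^ (-γ) - ((b : ℕ) : ℚ_[p]) * (p : ℚ_[p]) ^ (-γ)‖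
      ≤ (p : ℝ) ^ (γ - 1)) : a = b := by
  by_contra hab
  have hp1 : 1 < (p : ℝ) := by exact_mod_cast (Fact.out (p := p.Prime)).one_lt
  have hdvd : ¬ ((p : ℤ) ∣ ((a : ℕ) : ℤ) - ((b : ℕ) : ℤ)) := by
    intro hd
    have ha : (a:ℕ) < p := a.2
    have hb : (b:ℕ) < p := b.2
    have hne : (a:ℕ) ≠ (b:ℕ) := fun h0 => hab (Fin.ext h0)
    have := Int.eq_zero_of_abs_lt_dvd hd (abs_lt.2 ⟨by omega, by omega⟩)
    omega
  have hnorm1 : ‖((((a:ℕ):ℤ) - ((b:ℕ):ℤ) : ℤ) : ℚ_[p])‖ = 1 := by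
    refine le_antisymm (Padic.norm_int_le_one _) ?_
    by_contra hlt
    push_neg at hlt
    exact hdvd (Padic.norm_intCast_lt_one_iff.1 hlt)
  have heq : ((a : ℕ) : ℚ_[p]) * (p : ℚ_[p]) ^ (-γ) - ((b : ℕ) : ℚ_[p]) * (p : ℚ_[p]) ^ (-γ)
      = ((((a:ℕ):ℤ) - ((b:ℕ):ℤ) : ℤ) : ℚ_[p]) * (p : ℚ_[p]) ^ (-γ) := by
    push_cast; ring
  rw [heq, norm_mul, hnorm1, one_mul, Padic.norm_p_zpow, neg_neg] at h
  have : (γ:ℤ) ≤ γ - 1 := by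
    have := (zpow_right_strictMono₀ hp1).le_iff_le.1 h
    exact this
  omega

end onedim

section pispace
variable (p : ℕ) [Fact p.Prime] (n : ℕ)

private lemma hpR1 : (1:ℝ) < (p:ℝ) := by exact_mod_cast (Fact.out (p := p.Prime)).one_lt
private lemma hpR0 : (0:ℝ) < (p:ℝ) := lt_trans one_pos (hpR1 p)
private lemma hzpow_pos (γ : ℤ) : (0:ℝ) < (p:ℝ)^γ := zpow_pos (hpR0 p) _
private lemma hpE0 : (p:ℝ≥0∞) ≠ 0 := by
  simpa using (Fact.out (p := p.Prime)).pos.ne'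
private lemma hpEtop : (p:ℝ≥0∞) ≠ ⊤ := ENNReal.natCast_ne_top p

instance : (μp p n).IsAddLeftInvariant := Measure.isAddLeftInvariant_addHaarMeasure _
instance : (μp p n).IsAddHaarMeasure := Measure.isAddHaarMeasure_addHaarMeasure _

noncomputable def cvec (γ : ℤ) (v : Fin n → Fin p) : Fin n → ℚ_[p] :=
  fun i => ((v i : ℕ) : ℚ_[p]) * (p : ℚ_[p]) ^ (-γ)

lemma mem_vadd_ball_iff (γ : ℤ) (c x : Fin n → ℚ_[p]) (r : ℝ) (hr : 0 ≤ r) :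
    x ∈ c +ᵥ closedBall (0 : Fin n → ℚ_[p]) r ↔ ∀ i, ‖x i - c i‖ ≤ r := by
  rw [Set.mem_vadd_set_iff_neg_vadd_mem, vadd_eq_add, mem_closedBall_zero_iff,
    pi_norm_le_iff_of_nonneg hr]
  constructor
  · intro h i; have := h i; rwa [Pi.add_apply, Pi.neg_apply, neg_add_eq_sub] at this
  · intro h i; rw [Pi.add_apply, Pi.neg_apply, neg_add_eq_sub]; exact h i

lemma cover (γ : ℤ) : closedBall (0 : Fin n → ℚ_[p]) ((p:ℝ)^γ) =
    ⋃ v : Fin n → Fin p, (cvec p n γ v +ᵥ closedBall (0 : Fin n → ℚ_[p]) ((p:ℝ)^(γ-1))) := by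
  have hr' : (0:ℝ) ≤ (p:ℝ)^(γ-1) := le_of_lt (hzpow_pos p _)
  ext x
  rw [mem_closedBall_zero_iff, pi_norm_le_iff_of_nonneg (le_of_lt (hzpow_pos p γ))]
  constructor
  · intro hx
    choose v hv using fun i => exists_res p γ (x i) (hx i)
    exact Set.mem_iUnion.2 ⟨v, (mem_vadd_ball_iff p n γ _ x _ hr').2 hv⟩
  · intro hx
    obtain ⟨v, hv⟩ := Set.mem_iUnion.1 hx
    rw [mem_vadd_ball_iff p n γ _ x _ hr'] at hv
    intro i
    have h1 : ‖cvec p n γ v i‖ ≤ (p:ℝ)^γ := by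
      show ‖((v i : ℕ) : ℚ_[p]) * (p : ℚ_[p]) ^ (-γ)‖ ≤ _
      rw [norm_mul, Padic.norm_p_zpow, neg_neg]
      have : ‖((v i : ℕ) : ℚ_[p])‖ ≤ 1 := by
        have := Padic.norm_int_le_one (p := p) ((v i : ℕ) : ℤ)
        simpa using this
      nlinarith [hzpow_pos p γ]
    have h2 : ‖x i - cvec p n γ v i‖ ≤ (p:ℝ)^γ := by
      refine le_trans (hv i) ?_
      exact zpow_le_zpow_right₀ (le_of_lt (hpR1 p)) (by omega)
    calc ‖x i‖ = ‖(x i - cvec p n γ v i) + cvec p n γ v i‖ := by ring_nf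
      _ ≤ max ‖x i - cvec p n γ v i‖ ‖cvec p n γ v i‖ := Padic.nonarchimedean _ _
      _ ≤ (p:ℝ)^γ := max_le h2 h1

lemma cover_disjoint (γ : ℤ) :
    Pairwise (Function.onFun Disjoint
      fun v : Fin n → Fin p => cvec p n γ v +ᵥ closedBall (0 : Fin n → ℚ_[p]) ((p:ℝ)^(γ-1))) := by
  intro v w hvw
  rw [Function.onFun, Set.disjoint_left]
  intro x hxv hxw
  apply hvw
  funext i
  have hr' : (0:ℝ) ≤ (p:ℝ)^(γ-1) := le_of_lt (hzpow_pos p _)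
  have h1 := (mem_vadd_ball_iff p n γ _ x _ hr').1 hxv i
  have h2 := (mem_vadd_ball_iff p n γ _ x _ hr').1 hxw i
  apply res_unique p γ
  show ‖((v i : ℕ) : ℚ_[p]) * (p : ℚ_[p]) ^ (-γ) - ((w i : ℕ) : ℚ_[p]) * (p : ℚ_[p]) ^ (-γ)‖ ≤ _
  calc ‖((v i : ℕ) : ℚ_[p]) * (p : ℚ_[p]) ^ (-γ) - ((w i : ℕ) : ℚ_[p]) * (p : ℚ_[p]) ^ (-γ)‖
      = ‖(x i - ((w i : ℕ) : ℚ_[p]) * (p : ℚ_[p]) ^ (-γ)) +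
        (-(x i - ((v i : ℕ) : ℚ_[p]) * (p : ℚ_[p]) ^ (-γ)))‖ := by ring_nf
    _ ≤ max ‖x i - ((w i : ℕ) : ℚ_[p]) * (p : ℚ_[p]) ^ (-γ)‖
        ‖-(x i - ((v i : ℕ) : ℚ_[p]) * (p : ℚ_[p]) ^ (-γ))‖ := Padic.nonarchimedean _ _
    _ ≤ (p:ℝ)^(γ-1) := by rw [norm_neg]; exact max_le h2 h1


lemma meas_vadd (a : Fin n → ℚ_[p]) (s : Set (Fin n → ℚ_[p])) : μp p n (a +ᵥ s) = μp p n s := by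
  have h : a +ᵥ s = (fun x => (-a) + x) ⁻¹' s := by
    ext x
    rw [Set.mem_vadd_set_iff_neg_vadd_mem]
    rfl
  rw [h]
  exact measure_preimage_add (μp p n) (-a) s

lemma meas_ball_step (γ : ℤ) : μp p n (closedBall 0 ((p:ℝ)^γ)) =
    (p:ℝ≥0∞)^n * μp p n (closedBall 0 ((p:ℝ)^(γ-1))) := by
  conv_lhs => rw [cover p n γ]
  rw [measure_iUnion (cover_disjoint p n γ)
    (fun v => (measurableSet_closedBall).const_vadd _)]
  simp only [meas_vadd]
  rw [tsum_fintype]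
  rw [Finset.sum_const, nsmul_eq_mul]
  congr 1
  simp [Fintype.card_fun]

lemma meas_ball_zpow (γ : ℤ) : μp p n (closedBall 0 ((p:ℝ)^γ)) = (p:ℝ≥0∞)^((n:ℤ)*γ) := by
  have hzero : μp p n (closedBall 0 ((p:ℝ)^(0:ℤ))) = 1 := by
    rw [zpow_zero]
    exact Measure.addHaarMeasure_self (K₀ := unitBall p n)
  have hfin : ∀ δ : ℤ, μp p n (closedBall 0 ((p:ℝ)^δ)) ≠ ⊤ :=
    fun δ => (isCompact_closedBall _ _).measure_lt_top.ne
  have hpow0 : ((p:ℝ≥0∞)^n) ≠ 0 := pow_ne_zero _ (hpE0 p)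
  have hpowtop : ((p:ℝ≥0∞)^n) ≠ ⊤ := by
    exact ENNReal.pow_ne_top (hpEtop p)
  induction γ using Int.induction_on with
  | zero => simpa using hzero
  | succ k ih =>
    have hstep := meas_ball_step p n ((k:ℤ)+1)
    rw [add_sub_cancel_right, ih] at hstep
    rw [hstep, ← zpow_natCast (p:ℝ≥0∞) n, ← ENNReal.zpow_add (hpE0 p) (hpEtop p)]
    ring_nf
  | pred k ih =>
    have hstep := meas_ball_step p n (-(k:ℤ))
    rw [ih] at hstep
    have : (p:ℝ≥0∞)^((n:ℤ) * (-(k:ℤ))) = (p:ℝ≥0∞)^n * (p:ℝ≥0∞)^((n:ℤ)*(-(k:ℤ)-1)) := by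
      rw [← zpow_natCast (p:ℝ≥0∞) n, ← ENNReal.zpow_add (hpE0 p) (hpEtop p)]
      ring_nf
    rw [this] at hstep
    exact ((ENNReal.mul_right_inj hpow0 hpowtop).1 hstep).symm

lemma meas_ball_ofReal (γ : ℤ) :
    μp p n (closedBall 0 ((p:ℝ)^γ)) = ENNReal.ofReal ((p:ℝ) ^ ((n:ℝ)*(γ:ℝ))) := by
  rw [meas_ball_zpow]
  have h1 : (p:ℝ≥0∞) = ENNReal.ofReal (p:ℝ) := by
    simp [ENNReal.ofReal_natCast]
  rw [h1, ← ENNReal.rpow_intCast (ENNReal.ofReal (p:ℝ)) ((n:ℤ)*γ),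
    ENNReal.ofReal_rpow_of_pos (hpR0 p)]
  push_cast
  ring_nf

lemma meas_singleton_zero (hn : 0 < n) : μp p n {(0 : Fin n → ℚ_[p])} = 0 := by
  have hc1 : ((p:ℝ≥0∞)^n)⁻¹ < 1 := by
    rw [ENNReal.inv_lt_one]
    apply one_lt_pow₀ ?_ hn.ne'
    exact_mod_cast (Fact.out (p := p.Prime)).one_lt
  have hbound : ∀ k : ℕ, μp p n {(0 : Fin n → ℚ_[p])} ≤ (((p:ℝ≥0∞)^n)⁻¹)^k := by
    intro k
    have hsub : {(0 : Fin n → ℚ_[p])} ⊆ closedBall 0 ((p:ℝ)^(-(k:ℤ))) := by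
      intro x hx
      rw [Set.mem_singleton_iff] at hx
      subst hx
      exact mem_closedBall_self (le_of_lt (hzpow_pos p _))
    refine le_trans (measure_mono hsub) (le_of_eq ?_)
    rw [meas_ball_zpow]
    have e1 : (n:ℤ) * (-(k:ℤ)) = -(((n*k : ℕ) : ℤ)) := by push_cast; ring
    rw [e1, ENNReal.zpow_neg, zpow_natCast, pow_mul, ENNReal.inv_pow]
  refine le_antisymm ?_ zero_le
  exact ge_of_tendsto' (ENNReal.tendsto_pow_atTop_nhds_zero_of_lt_one hc1) hbound
section analysis
variable (p : ℕ) [Fact p.Prime] (n : ℕ)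

private lemma rple {a b : ℝ} : (p:ℝ) ^ a ≤ (p:ℝ) ^ b ↔ a ≤ b :=
  Real.rpow_le_rpow_left_iff (hpR1 p)

private lemma rppos (a : ℝ) : (0:ℝ) < (p:ℝ) ^ a := Real.rpow_pos_of_pos (hpR0 p) a

private lemma rz (m : ℤ) : (p:ℝ) ^ m = (p:ℝ) ^ ((m:ℝ)) := (Real.rpow_intCast _ _).symm

lemma setBall (r : ℝ) : {y : Fin n → ℚ_[p] | ‖y‖ ≤ r} = closedBall 0 r := by
  ext y; simp [mem_closedBall_zero_iff]

lemma norm_exists (x : Fin n → ℚ_[p]) (hx : x ≠ 0) : ∃ β : ℤ, ‖x‖ = (p:ℝ)^β := by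
  have hne : (Finset.univ : Finset (Fin n)).Nonempty := by
    rcases Function.ne_iff.1 hx with ⟨j, hj⟩
    exact ⟨j, Finset.mem_univ j⟩
  obtain ⟨i, _, hi⟩ := Finset.exists_mem_eq_sup Finset.univ hne (fun i => ‖x i‖₊)
  have hnorm : ‖x‖ = ‖x i‖ := by
    rw [Pi.norm_def, hi]
    rfl
  have hxi : x i ≠ 0 := by
    intro h0
    rcases Function.ne_iff.1 hx with ⟨j, hj⟩
    have h1 : ‖x j‖ ≤ ‖x‖ := norm_le_pi_norm x j
    rw [hnorm, h0, norm_zero] at h1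
    exact hj (norm_le_zero_iff.1 h1)
  refine ⟨-(x i).valuation, ?_⟩
  rw [hnorm, Padic.norm_eq_zpow_neg_valuation hxi]

lemma ball_inter (β δ : ℤ) : closedBall (0 : Fin n → ℚ_[p]) ((p:ℝ)^β) ∩ closedBall 0 ((p:ℝ)^δ)
    = closedBall 0 ((p:ℝ)^(min β δ)) := by
  have hmono : Monotone fun m : ℤ => (p:ℝ)^m := (zpow_right_strictMono₀ (hpR1 p)).monotone
  ext y
  simp only [Set.mem_inter_iff, mem_closedBall_zero_iff, le_min_iff, hmono.map_min]

private lemma zple {β δ : ℤ} : (p:ℝ)^β ≤ (p:ℝ)^δ ↔ β ≤ δ :=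
  (zpow_right_strictMono₀ (hpR1 p)).le_iff_le

lemma Hop_zero (hn : 0 < n) : Hop p n 0 (f₀ p n) 0 = 0 := by
  unfold Hop
  rw [norm_zero, Real.zero_rpow (ne_of_lt (by
    have : (0:ℝ) < n := by exact_mod_cast hn
    linarith)), zero_mul]

lemma Hop_eq (x : Fin n → ℚ_[p]) (β : ℤ) (hβ : ‖x‖ = (p:ℝ)^β) :
    Hop p n 0 (f₀ p n) x = (p:ℝ) ^ (-((n:ℝ) * ((max β 0 : ℤ) : ℝ))) := by
  unfold Hop f₀
  rw [setBall, setBall, hβ]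
  rw [integral_indicator measurableSet_closedBall, Measure.restrict_restrict
    measurableSet_closedBall, setIntegral_const, smul_eq_mul, mul_one,
    show (1:ℝ) = (p:ℝ)^(0:ℤ) by norm_num, ball_inter,
    measureReal_def, meas_ball_ofReal, ENNReal.toReal_ofReal (le_of_lt (rppos p _))]
  rw [rz p β, ← Real.rpow_mul (le_of_lt (hpR0 p)), ← Real.rpow_add (hpR0 p)]
  congr 1
  rcases le_total β 0 with h | h
  · rw [min_eq_right h, max_eq_right h]
    push_cast
    ring
  · rw [min_eq_left h, max_eq_left h]
    push_cast
    ring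

lemma Hop_pos (x : Fin n → ℚ_[p]) (β : ℤ) (hβ : ‖x‖ = (p:ℝ)^β) :
    0 < Hop p n 0 (f₀ p n) x := by
  rw [Hop_eq p n x β hβ]; exact rppos p _

lemma Hop_abs (x : Fin n → ℚ_[p]) (β : ℤ) (hβ : ‖x‖ = (p:ℝ)^β) :
    |Hop p n 0 (f₀ p n) x| = (p:ℝ) ^ (-((n:ℝ) * ((max β 0 : ℤ) : ℝ))) := by
  rw [abs_of_pos (Hop_pos p n x β hβ), Hop_eq p n x β hβ]

lemma Hop_abs_le_one (hn : 0 < n) (x : Fin n → ℚ_[p]) : |Hop p n 0 (f₀ p n) x| ≤ 1 := by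
  by_cases hx : x = 0
  · rw [hx, Hop_zero p n hn]; norm_num
  · obtain ⟨β, hβ⟩ := norm_exists p n x hx
    rw [Hop_abs p n x β hβ]
    apply Real.rpow_le_one_of_one_le_of_nonpos (le_of_lt (hpR1 p))
    have h1 : (0:ℝ) ≤ ((max β 0 : ℤ) : ℝ) := by exact_mod_cast le_max_right β 0
    have h2 : (0:ℝ) ≤ (n:ℝ) := Nat.cast_nonneg n
    nlinarith

lemma setA (hn : 0 < n) (γ : ℤ) (t : ℝ) (ht : 0 < t) (ht1 : t < 1) :
    ∃ B : ℤ, min γ 0 ≤ B ∧ B ≤ γ ∧ (p:ℝ) ^ ((n:ℝ) * (B:ℝ)) < 1/t ∧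
      {x : Fin n → ℚ_[p] | ‖x‖ ≤ (p:ℝ)^γ ∧ t < |Hop p n 0 (f₀ p n) x|}
        = closedBall 0 ((p:ℝ)^B) \ {0} := by
  set T : ℤ → Prop := fun β => β ≤ γ ∧ t < (p:ℝ) ^ (-((n:ℝ) * ((max β 0 : ℤ) : ℝ))) with hT
  have hTmono : ∀ β β' : ℤ, β' ≤ β → T β → T β' := by
    intro β β' hle ⟨h1, h2⟩
    refine ⟨le_trans hle h1, lt_of_lt_of_le h2 ((rple p).2 ?_)⟩
    have : ((max β' 0 : ℤ) : ℝ) ≤ ((max β 0 : ℤ) : ℝ) := by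
      exact_mod_cast max_le_max hle (le_refl (0:ℤ))
    nlinarith [this, Nat.cast_nonneg (α := ℝ) n]
  have hTinh : T (min γ 0) := by
    constructor
    · exact min_le_left _ _
    · have hmax : max (min γ 0) 0 = 0 := max_eq_right (min_le_right _ _)
      rw [hmax]
      simpa using ht1
  have hTbdd : ∀ β : ℤ, T β → β ≤ γ := fun β hβ => hβ.1
  obtain ⟨B, hBT, hBmax⟩ := Int.exists_greatest_of_bdd ⟨γ, fun z hz => hTbdd z hz⟩ ⟨_, hTinh⟩
  refine ⟨B, hBmax _ hTinh, hBT.1, ?_, ?_⟩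
  · -- p^(nB) < 1/t
    have h2 := hBT.2
    have hc : (p:ℝ) ^ ((n:ℝ) * ((max B 0 : ℤ) : ℝ)) < 1/t := by
      rw [Real.rpow_neg (le_of_lt (hpR0 p))] at h2
      rw [lt_div_iff₀ ht]
      calc (p:ℝ) ^ ((n:ℝ) * ((max B 0 : ℤ) : ℝ)) * t
          < (p:ℝ) ^ ((n:ℝ) * ((max B 0 : ℤ) : ℝ)) * ((p:ℝ) ^ ((n:ℝ) * ((max B 0 : ℤ) : ℝ)))⁻¹ := by
            exact mul_lt_mul_of_pos_left h2 (rppos p _)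
        _ = 1 := mul_inv_cancel₀ (ne_of_gt (rppos p _))
    refine lt_of_le_of_lt ((rple p).2 ?_) hc
    have : (B:ℝ) ≤ ((max B 0 : ℤ) : ℝ) := by exact_mod_cast le_max_left B 0
    nlinarith [Nat.cast_nonneg (α := ℝ) n]
  · ext x
    simp only [Set.mem_setOf_eq, Set.mem_diff, mem_closedBall_zero_iff, Set.mem_singleton_iff]
    constructor
    · rintro ⟨hx1, hx2⟩
      have hx0 : x ≠ 0 := by
        intro h0
        rw [h0, Hop_zero p n hn, abs_zero] at hx2
        exact absurd hx2 (not_lt.2 (le_of_lt ht))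
      obtain ⟨β, hβ⟩ := norm_exists p n x hx0
      have hβT : T β := by
        refine ⟨(zple p).1 (hβ ▸ hx1), ?_⟩
        rwa [Hop_abs p n x β hβ] at hx2
      have : β ≤ B := hBmax β hβT
      exact ⟨hβ ▸ (zple p).2 this, hx0⟩
    · rintro ⟨hx1, hx0⟩
      obtain ⟨β, hβ⟩ := norm_exists p n x hx0
      have hβB : β ≤ B := (zple p).1 (hβ ▸ hx1)
      have hβT : T β := hTmono B β hβB hBT
      refine ⟨hβ ▸ (zple p).2 (le_trans hβB hBT.1), ?_⟩
      rw [Hop_abs p n x β hβ]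
      exact hβT.2

end analysis

/-- Sharpness for the `p`-adic Hardy operator on central Morrey spaces:
`‖H^p f₀‖_{WḂ^{q,λ}} = 1 = ‖f₀‖_{Ḃ^{q,λ}}`; hence the operator norm of
`H^p : Ḃ^{q,λ} → WḂ^{q,λ}` is exactly `1`. -/
theorem hardy_morrey_sharp (p : ℕ) [Fact p.Prime] (n : ℕ) (hn : 0 < n)
    (q l : ℝ) (hq : 1 ≤ q) (hl1 : -(1 / q) ≤ l) (hl2 : l < 0) :
    wmorrey p n q l (Hop p n 0 (f₀ p n)) = 1 ∧ morrey p n q l (f₀ p n) = 1 := by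
  have hq0 : (0:ℝ) < q := lt_of_lt_of_le one_pos hq
  have hq0' : q ≠ 0 := ne_of_gt hq0
  have hqinv : (0:ℝ) < 1/q := by positivity
  have hl1' : (0:ℝ) ≤ 1/q + l := by linarith
  have h1l : (0:ℝ) ≤ 1 + l := by
    have h : 1/q ≤ 1 := by rw [div_le_one hq0]; exact hq
    linarith
  have h1lq : (0:ℝ) ≤ 1 + l*q := by
    have h := mul_le_mul_of_nonneg_right hl1 (le_of_lt hq0)
    have h2 : (-(1/q)) * q = -1 := by field_simp
    nlinarith
  constructor
  · -- weak Morrey norm of Hop f₀ equals 1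
    apply le_antisymm
    · apply iSup_le
      intro γ
      set M : ℝ := (p:ℝ) ^ ((n:ℝ) * (γ:ℝ)) with hM
      have hMpos : 0 < M := rppos p _
      have key : (⨆ (t:ℝ) (_ : 0 < t), ENNReal.ofReal t *
          (μp p n {x : Fin n → ℚ_[p] | ‖x‖ ≤ (p:ℝ)^γ ∧
            t < |Hop p n 0 (f₀ p n) x|}) ^ (1/q))
          ≤ ENNReal.ofReal (M ^ (l + 1/q)) := by
        apply iSup_le; intro t; apply iSup_le; intro ht
        rcases le_or_gt 1 t with ht1 | ht1
        · have hempty : {x : Fin n → ℚ_[p] | ‖x‖ ≤ (p:ℝ)^γ ∧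
              t < |Hop p n 0 (f₀ p n) x|} = ∅ := by
            ext x
            simp only [Set.mem_setOf_eq, Set.mem_empty_iff_false, iff_false, not_and]
            intro _
            exact not_lt.2 (le_trans (Hop_abs_le_one p n hn x) ht1)
          rw [hempty, measure_empty, ENNReal.zero_rpow_of_pos hqinv, mul_zero]
          exact zero_le
        · obtain ⟨B, hB0, hBγ, hBt, hBset⟩ := setA p n hn γ t ht ht1
          set m : ℝ := (p:ℝ) ^ ((n:ℝ) * (B:ℝ)) with hm
          have hmpos : 0 < m := rppos p _
          have hmeas : μp p n {x : Fin n → ℚ_[p] | ‖x‖ ≤ (p:ℝ)^γ ∧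
              t < |Hop p n 0 (f₀ p n) x|} = ENNReal.ofReal m := by
            rw [hBset, measure_diff_null (meas_singleton_zero p n hn), meas_ball_ofReal]
          rw [hmeas, ENNReal.ofReal_rpow_of_pos hmpos, ← ENNReal.ofReal_mul (le_of_lt ht)]
          apply ENNReal.ofReal_le_ofReal
          have hm1 : m ≤ 1/t := le_of_lt hBt
          have hm2 : m ≤ M := by
            rw [hm, hM]
            apply (rple p).2
            have : (B:ℝ) ≤ (γ:ℝ) := by exact_mod_cast hBγ
            nlinarith [Nat.cast_nonneg (α := ℝ) n]
          have hstep1 : (1/t) ^ (-l : ℝ) = t ^ (l : ℝ) := by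
            rw [one_div, Real.inv_rpow (le_of_lt ht), ← Real.rpow_neg (le_of_lt ht), neg_neg]
          calc t * m ^ (1/q)
              = t * (m ^ (-l) * m ^ (1/q + l)) := by
                rw [← Real.rpow_add hmpos]; ring_nf
            _ ≤ t * ((1/t) ^ (-l) * M ^ (1/q + l)) := by
                apply mul_le_mul_of_nonneg_left ?_ (le_of_lt ht)
                apply mul_le_mul (Real.rpow_le_rpow (le_of_lt hmpos) hm1 (by linarith))
                  (Real.rpow_le_rpow (le_of_lt hmpos) hm2 hl1')
                  (Real.rpow_nonneg (le_of_lt hmpos) _)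
                  (Real.rpow_nonneg (by positivity) _)
            _ = t ^ ((1:ℝ)+l) * M ^ (1/q + l) := by
                rw [hstep1, ← mul_assoc]
                congr 1
                rw [Real.rpow_add ht, Real.rpow_one]
            _ ≤ 1 * M ^ (l + 1/q) := by
                rw [add_comm l (1/q)]
                exact mul_le_mul_of_nonneg_right
                  (Real.rpow_le_one (le_of_lt ht) (le_of_lt ht1) h1l)
                  (Real.rpow_nonneg (le_of_lt hMpos) _)
            _ = M ^ (l + 1/q) := one_mul _
      calc ENNReal.ofReal (M ^ (-(l + 1/q))) *
            (⨆ (t:ℝ) (_ : 0 < t), ENNReal.ofReal t *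
              (μp p n {x : Fin n → ℚ_[p] | ‖x‖ ≤ (p:ℝ)^γ ∧
                t < |Hop p n 0 (f₀ p n) x|}) ^ (1/q))
          ≤ ENNReal.ofReal (M ^ (-(l + 1/q))) * ENNReal.ofReal (M ^ (l + 1/q)) :=
            mul_le_mul_right key _
        _ = 1 := by
            rw [← ENNReal.ofReal_mul (Real.rpow_nonneg (le_of_lt hMpos) _),
              ← Real.rpow_add hMpos, neg_add_cancel, Real.rpow_zero, ENNReal.ofReal_one]
    · refine le_trans ?_ (le_iSup _ (0:ℤ))
      have hw0 : ENNReal.ofReal (((p:ℝ) ^ ((n:ℝ) * (((0:ℤ)):ℝ))) ^ (-(l + 1/q))) = 1 := by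
        norm_num
      rw [hw0, one_mul]
      have hS : ∀ t : ℝ, 0 < t → t < 1 → ENNReal.ofReal t ≤
          ⨆ (t:ℝ) (_ : 0 < t), ENNReal.ofReal t *
            (μp p n {x : Fin n → ℚ_[p] | ‖x‖ ≤ (p:ℝ)^((0:ℤ)) ∧
              t < |Hop p n 0 (f₀ p n) x|}) ^ (1/q) := by
        intro t ht ht1
        have hμ : μp p n {x : Fin n → ℚ_[p] | ‖x‖ ≤ (p:ℝ)^((0:ℤ)) ∧
            t < |Hop p n 0 (f₀ p n) x|} = 1 := by
          obtain ⟨B, hB0, hBγ, _, hBset⟩ := setA p n hn 0 t ht ht1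
          have hB : B = 0 := le_antisymm hBγ (by simpa using hB0)
          rw [hB] at hBset
          rw [hBset, measure_diff_null (meas_singleton_zero p n hn), meas_ball_ofReal]
          norm_num
        have hterm : ENNReal.ofReal t *
            (μp p n {x : Fin n → ℚ_[p] | ‖x‖ ≤ (p:ℝ)^((0:ℤ)) ∧
              t < |Hop p n 0 (f₀ p n) x|}) ^ (1/q) = ENNReal.ofReal t := by
          rw [hμ, ENNReal.one_rpow, mul_one]
        calc ENNReal.ofReal t
            = ENNReal.ofReal t *
              (μp p n {x : Fin n → ℚ_[p] | ‖x‖ ≤ (p:ℝ)^((0:ℤ)) ∧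
                t < |Hop p n 0 (f₀ p n) x|}) ^ (1/q) := hterm.symm
          _ ≤ ⨆ (_ : 0 < t), ENNReal.ofReal t *
              (μp p n {x : Fin n → ℚ_[p] | ‖x‖ ≤ (p:ℝ)^((0:ℤ)) ∧
                t < |Hop p n 0 (f₀ p n) x|}) ^ (1/q) := by rw [iSup_pos ht]
          _ ≤ _ := le_iSup (fun t : ℝ => ⨆ (_ : 0 < t), ENNReal.ofReal t *
              (μp p n {x : Fin n → ℚ_[p] | ‖x‖ ≤ (p:ℝ)^((0:ℤ)) ∧
                t < |Hop p n 0 (f₀ p n) x|}) ^ (1/q)) t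
      by_contra hlt
      push_neg at hlt
      set S := ⨆ (t:ℝ) (_ : 0 < t), ENNReal.ofReal t *
            (μp p n {x : Fin n → ℚ_[p] | ‖x‖ ≤ (p:ℝ)^((0:ℤ)) ∧
              t < |Hop p n 0 (f₀ p n) x|}) ^ (1/q) with hSdef
      have hStop : S ≠ ⊤ := ne_top_of_lt (lt_of_lt_of_le hlt le_top)
      have haLt : S.toReal < 1 := by
        have := ENNReal.toReal_lt_toReal hStop (by norm_num : (1:ℝ≥0∞) ≠ ⊤)
        simpa using this.2 hlt
      have ha0 : 0 ≤ S.toReal := ENNReal.toReal_nonneg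
      set t := (S.toReal + 1)/2 with htdef
      have ht : 0 < t := by rw [htdef]; linarith
      have ht1 : t < 1 := by rw [htdef]; linarith
      have h1 := hS t ht ht1
      have h2 : S < ENNReal.ofReal t := by
        conv_lhs => rw [← ENNReal.ofReal_toReal hStop]
        rw [ENNReal.ofReal_lt_ofReal_iff ht]
        rw [htdef]; linarith
      exact absurd h1 (not_le.2 h2)
  · -- Morrey norm of f₀ equals 1
    have hint : ∀ γ : ℤ, (∫⁻ x in {x : Fin n → ℚ_[p] | ‖x‖ ≤ (p:ℝ)^γ},
        ENNReal.ofReal (|f₀ p n x|^q) ∂(μp p n))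
        = ENNReal.ofReal ((p:ℝ) ^ ((n:ℝ) * ((min 0 γ : ℤ):ℝ))) := by
      intro γ
      have hind : ∀ x : Fin n → ℚ_[p], ENNReal.ofReal (|f₀ p n x| ^ q) =
          (closedBall (0 : Fin n → ℚ_[p]) 1).indicator (fun _ => (1:ℝ≥0∞)) x := by
        intro x
        unfold f₀
        rw [setBall p n 1]
        by_cases hx : x ∈ closedBall (0 : Fin n → ℚ_[p]) 1
        · rw [Set.indicator_of_mem hx, Set.indicator_of_mem hx, abs_one, Real.one_rpow,
            ENNReal.ofReal_one]
        · rw [Set.indicator_of_notMem hx, Set.indicator_of_notMem hx, abs_zero,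
            Real.zero_rpow hq0', ENNReal.ofReal_zero]
      simp_rw [hind]
      rw [setBall, lintegral_indicator measurableSet_closedBall,
        Measure.restrict_restrict measurableSet_closedBall, setLIntegral_one,
        show (1:ℝ) = (p:ℝ)^(0:ℤ) by norm_num, ball_inter, meas_ball_ofReal]
    apply le_antisymm
    · apply iSup_le
      intro γ
      rw [hint γ]
      rw [← ENNReal.ofReal_mul (Real.rpow_nonneg (le_of_lt (rppos p _)) _)]
      have hprod : ((p:ℝ) ^ ((n:ℝ)*(γ:ℝ))) ^ (-(1+l*q)) *
          (p:ℝ) ^ ((n:ℝ) * ((min 0 γ : ℤ):ℝ)) =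
          (p:ℝ) ^ ((n:ℝ)*(γ:ℝ)*(-(1+l*q)) + (n:ℝ) * ((min 0 γ : ℤ):ℝ)) := by
        rw [← Real.rpow_mul (le_of_lt (hpR0 p)), ← Real.rpow_add (hpR0 p)]
      rw [hprod]
      have he : (n:ℝ)*(γ:ℝ)*(-(1+l*q)) + (n:ℝ) * ((min 0 γ : ℤ):ℝ) ≤ 0 := by
        have hn0 : (0:ℝ) ≤ (n:ℝ) := Nat.cast_nonneg n
        rcases le_total γ 0 with h | h
        · rw [min_eq_right h]
          have ha : (γ:ℝ) ≤ 0 := by exact_mod_cast h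
          have hgl : (0:ℝ) ≤ (γ:ℝ) * l := by
            nlinarith [mul_nonneg (neg_nonneg.2 ha) (neg_nonneg.2 (le_of_lt hl2))]
          nlinarith [mul_nonneg (mul_nonneg hn0 hgl) (le_of_lt hq0)]
        · rw [min_eq_left h]
          have ha : (0:ℝ) ≤ (γ:ℝ) := by exact_mod_cast h
          push_cast
          nlinarith [mul_nonneg (mul_nonneg hn0 ha) h1lq]
      have hle1 : (p:ℝ) ^ ((n:ℝ)*(γ:ℝ)*(-(1+l*q)) + (n:ℝ) * ((min 0 γ : ℤ):ℝ)) ≤ 1 :=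
        Real.rpow_le_one_of_one_le_of_nonpos (le_of_lt (hpR1 p)) he
      calc (ENNReal.ofReal ((p:ℝ) ^ ((n:ℝ)*(γ:ℝ)*(-(1+l*q)) + (n:ℝ) * ((min 0 γ : ℤ):ℝ)))) ^ (1/q)
          ≤ (1 : ℝ≥0∞) ^ (1/q) := by
            apply ENNReal.rpow_le_rpow ?_ (le_of_lt hqinv)
            rw [← ENNReal.ofReal_one]
            exact ENNReal.ofReal_le_ofReal hle1
        _ = 1 := ENNReal.one_rpow _
    · refine le_trans ?_ (le_iSup _ (0:ℤ))
      rw [hint 0]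
      norm_num
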